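/- Let A ∈ ℝ^{m×n} with rows A_i, all nonzero, and ‖A‖_F > 0. Define P ∈ ℝ^{mn×m} with columns e_i ⊗ (A_i/‖A_i‖) for i ∈ [m], and Q ∈ ℝ^{mn×n} with columns (Ã/‖A‖_F) ⊗ e_j for j ∈ [n], where Ã ∈ ℝ^m has entries Ã_i = ‖A_i‖. Then PᵗP = I_m, QᵗQ = I_n, and PᵗQ = A/‖A‖_F. -/

import Mathlib

open Matrix

theorem stmt7 {m n : ℕ} (A : Matrix (Fin m) (Fin n) ℝ)
    (hrows : ∀ i, 0 < Real.sqrt (∑ j, (A i j)^2))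
    (hF : 0 < Real.sqrt (∑ i, ∑ j, (A i j)^2))
    (P : Matrix (Fin m × Fin n) (Fin m) ℝ)
    (Q : Matrix (Fin m × Fin n) (Fin n) ℝ)
    (hP : ∀ p i', P p i' =
      if p.1 = i' then A p.1 p.2 / Real.sqrt (∑ j, (A p.1 j)^2) else 0)
    (hQ : ∀ p j', Q p j' =
      if p.2 = j' then Real.sqrt (∑ j, (A p.1 j)^2) / Real.sqrt (∑ i, ∑ j, (A i j)^2) else 0) :
    Pᵀ * P = 1 ∧ Qᵀ * Q = 1 ∧
      Pᵀ * Q = (Real.sqrt (∑ i, ∑ j, (A i j)^2))⁻¹ • A := by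
  set r : Fin m → ℝ := fun i => Real.sqrt (∑ j, (A i j)^2) with hr
  set F : ℝ := Real.sqrt (∑ i, ∑ j, (A i j)^2) with hFdef
  have hr2 : ∀ i, r i ^ 2 = ∑ j, (A i j)^2 := fun i =>
    Real.sq_sqrt (Finset.sum_nonneg fun j _ => sq_nonneg _)
  have hF2 : F ^ 2 = ∑ i, ∑ j, (A i j)^2 :=
    Real.sq_sqrt (Finset.sum_nonneg fun i _ => Finset.sum_nonneg fun j _ => sq_nonneg _)
  have hrne : ∀ i, r i ≠ 0 := fun i => (hrows i).ne'
  have hFne : F ≠ 0 := hF.ne'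
  refine ⟨?_, ?_, ?_⟩
  · ext i i'
    simp only [Matrix.mul_apply, Matrix.transpose_apply, Matrix.one_apply]
    rw [Fintype.sum_prod_type]
    simp only [hP]
    by_cases h : i = i'
    · subst h
      rw [Finset.sum_eq_single i]
      · simp only [if_pos rfl, if_true, eq_self_iff_true]
        have : ∀ b : Fin n, A i b / r i * (A i b / r i) = (A i b)^2 / (r i)^2 := by
          intro b; ring
        rw [show (fun b => A i b / r i * (A i b / r i)) = fun b => (A i b)^2 / (r i)^2 from
          funext this] at *
        rw [← Finset.sum_div, ← hr2 i, div_self (pow_ne_zero 2 (hrne i))]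
      · intro a _ ha
        apply Finset.sum_eq_zero
        intro b _
        simp [ha]
      · simp
    · rw [if_neg h]
      apply Finset.sum_eq_zero
      intro a _
      apply Finset.sum_eq_zero
      intro b _
      by_cases ha : a = i
      · subst ha; simp [h]
      · simp [ha]
  · ext j j'
    simp only [Matrix.mul_apply, Matrix.transpose_apply, Matrix.one_apply]
    rw [Fintype.sum_prod_type]
    simp only [hQ]
    by_cases h : j = j'
    · subst h
      have key : ∀ a : Fin m, ∑ b : Fin n, (if b = j then r a / F else 0) *
          (if b = j then r a / F else 0) = (r a)^2 / F^2 := by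
        intro a
        rw [Finset.sum_eq_single j]
        · simp only [if_pos rfl, if_true, eq_self_iff_true]
          rw [div_mul_div_comm, ← pow_two, ← pow_two]
        · intro b _ hb; simp [hb]
        · simp
      change (∑ a, ∑ b, (if b = j then r a / F else 0) * (if b = j then r a / F else 0)) = if j = j then 1 else 0
      simp only [key, if_pos rfl, if_true, eq_self_iff_true]
      rw [← Finset.sum_div]
      simp only [hr2]
      rw [← hF2, div_self (pow_ne_zero 2 hFne)]
    · rw [if_neg h]
      apply Finset.sum_eq_zero
      intro a _
      apply Finset.sum_eq_zero
      intro b _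
      by_cases hb : b = j
      · subst hb; simp [h]
      · simp [hb]
  · ext i j
    simp only [Matrix.mul_apply, Matrix.transpose_apply, Matrix.smul_apply, smul_eq_mul]
    rw [Fintype.sum_prod_type]
    simp only [hP, hQ]
    rw [Finset.sum_eq_single i]
    · rw [Finset.sum_eq_single j]
      · simp only [if_pos rfl, if_true, eq_self_iff_true]
        rw [div_mul_div_comm, mul_comm (A i j) (r i), mul_div_mul_left _ _ (hrne i),
          div_eq_inv_mul]
      · intro b _ hb; simp [hb]
      · simp
    · intro a _ ha
      apply Finset.sum_eq_zero
      intro b _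
      simp [ha]
    · simp
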